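/- For each a in (0,1), there exists a unique continuous function L_a : [0,1] → ℝ satisfying L_a(x) = a·L_a(2x) for 0 ≤ x ≤ 1/2 and L_a(x) = a + (1-a)·L_a(2x-1) for 1/2 ≤ x ≤ 1; moreover L_a(0) = 0, L_a(1) = 1, and L_a is monotone increasing. -/

import Mathlib

open Set

noncomputable section

namespace DeRhamAux

abbrev II : Set ℝ := Set.Icc (0:ℝ) 1

lemma zero_mem : (0:ℝ) ∈ II := by constructor <;> norm_num
lemma one_mem : (1:ℝ) ∈ II := by constructor <;> norm_num

/-- Nice functions: continuous maps on [0,1] with f 0 = 0, f 1 = 1, monotone. -/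
def S : Set C(II, ℝ) :=
  {f | f ⟨0, zero_mem⟩ = 0 ∧ f ⟨1, one_mem⟩ = 1 ∧ Monotone f}

lemma isClosed_S : IsClosed S := by
  have h0 : IsClosed {f : C(II, ℝ) | f ⟨0, zero_mem⟩ = 0} :=
    isClosed_singleton.preimage (continuous_eval_const _)
  have h1 : IsClosed {f : C(II, ℝ) | f ⟨1, one_mem⟩ = 1} :=
    isClosed_singleton.preimage (continuous_eval_const _)
  have h2 : IsClosed {f : C(II, ℝ) | Monotone f} := by
    have he : {f : C(II, ℝ) | Monotone f} =
        ⋂ (p : II × II) (_ : p.1 ≤ p.2), {f : C(II, ℝ) | f p.1 ≤ f p.2} := by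
      ext f
      simp only [mem_iInter, mem_setOf_eq]
      exact ⟨fun h p hp => h hp, fun h x y hxy => h (x, y) hxy⟩
    rw [he]
    exact isClosed_iInter fun p => isClosed_iInter fun _ =>
      isClosed_le (continuous_eval_const _) (continuous_eval_const _)
  exact h0.inter (h1.inter h2)

instance : Nonempty S :=
  ⟨⟨⟨fun t => (t : ℝ), continuous_subtype_val⟩, by simp, by simp,
    fun x y h => by exact_mod_cast h⟩⟩

/-- The de Rham operator, on real functions via `IccExtend`. -/
def Tfun (a : ℝ) (f : C(II, ℝ)) : ℝ → ℝ := fun x =>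
  if x ≤ 1/2 then a * IccExtend zero_le_one f (2*x)
  else a + (1-a) * IccExtend zero_le_one f (2*x - 1)

lemma continuous_IccExtend (f : C(II, ℝ)) : Continuous (IccExtend zero_le_one f) :=
  f.continuous.comp (continuous_projIcc)

lemma IccExt_zero (f : C(II, ℝ)) : IccExtend zero_le_one f 0 = f ⟨0, zero_mem⟩ :=
  IccExtend_of_mem _ f zero_mem

lemma IccExt_one (f : C(II, ℝ)) : IccExtend zero_le_one f 1 = f ⟨1, one_mem⟩ :=
  IccExtend_of_mem _ f one_mem

lemma continuous_Tfun (a : ℝ) (f : C(II, ℝ)) (hf : f ∈ S) : Continuous (Tfun a f) := by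
  apply Continuous.if_le
  · exact continuous_const.mul ((continuous_IccExtend f).comp (continuous_const.mul continuous_id))
  · exact continuous_const.add (continuous_const.mul ((continuous_IccExtend f).comp
      ((continuous_const.mul continuous_id).sub continuous_const)))
  · exact continuous_id
  · exact continuous_const
  · intro x hx
    subst hx
    have e1 : 2 * (1/2 : ℝ) = 1 := by norm_num
    have e2 : 2 * (1/2 : ℝ) - 1 = 0 := by norm_num
    rw [e2, e1, IccExt_zero, IccExt_one, hf.1, hf.2.1]
    ring

lemma Tfun_mem (a : ℝ) (ha : a ∈ Set.Ioo (0:ℝ) 1) (f : C(II, ℝ)) (hf : f ∈ S) :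
    (⟨fun t => Tfun a f t, (continuous_Tfun a f hf).comp continuous_subtype_val⟩ : C(II, ℝ)) ∈ S := by
  obtain ⟨h0, h1, hm⟩ := hf
  have hFm : Monotone (IccExtend zero_le_one f) := hm.IccExtend _
  refine ⟨?_, ?_, ?_⟩
  · show Tfun a f 0 = 0
    rw [Tfun, if_pos (by norm_num : (0:ℝ) ≤ 1/2)]
    rw [show (2:ℝ)*0 = 0 by norm_num, IccExt_zero, h0, mul_zero]
  · show Tfun a f 1 = 1
    rw [Tfun, if_neg (by norm_num : ¬ (1:ℝ) ≤ 1/2)]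
    rw [show (2:ℝ)*1 - 1 = 1 by norm_num, IccExt_one, h1]
    ring
  · intro s t hst
    show Tfun a f s ≤ Tfun a f t
    have hs1 : (s:ℝ) ≤ 1 := s.2.2
    have ht0 : (0:ℝ) ≤ (t:ℝ) := t.2.1
    rcases le_or_gt (s:ℝ) (1/2) with hs | hs
    · rcases le_or_gt (t:ℝ) (1/2) with ht | ht
      · rw [Tfun, if_pos hs, Tfun, if_pos ht]
        have hst' : (s:ℝ) ≤ t := hst
        exact mul_le_mul_of_nonneg_left (hFm (by linarith : 2*(s:ℝ) ≤ 2*(t:ℝ))) ha.1.le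
      · rw [Tfun, if_pos hs, Tfun, if_neg (not_le.2 ht)]
        have hFs : IccExtend zero_le_one f (2*(s:ℝ)) ≤ 1 := by
          have := hFm (show 2*(s:ℝ) ≤ 1 by linarith)
          rwa [IccExt_one, h1] at this
        have hFt : 0 ≤ IccExtend zero_le_one f (2*(t:ℝ) - 1) := by
          have := hFm (show (0:ℝ) ≤ 2*(t:ℝ) - 1 by linarith)
          rwa [IccExt_zero, h0] at this
        nlinarith [ha.1, ha.2]
    · have ht : ¬ (t:ℝ) ≤ 1/2 := by
        have : (s:ℝ) ≤ t := hst
        intro h; linarith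
      rw [Tfun, if_neg (not_le.2 hs), Tfun, if_neg ht]
      have : (s:ℝ) ≤ t := hst
      have := hFm (show 2*(s:ℝ) - 1 ≤ 2*(t:ℝ) - 1 by linarith)
      nlinarith [ha.2]

/-- The operator on the subtype. -/
def T (a : ℝ) (ha : a ∈ Set.Ioo (0:ℝ) 1) : S → S := fun f =>
  ⟨⟨fun t => Tfun a f.1 t, (continuous_Tfun a f.1 f.2).comp continuous_subtype_val⟩,
    Tfun_mem a ha f.1 f.2⟩

lemma dist_T (a : ℝ) (ha : a ∈ Set.Ioo (0:ℝ) 1) (f g : S) :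
    dist (T a ha f) (T a ha g) ≤ max a (1-a) * dist f g := by
  have hK0 : (0:ℝ) ≤ max a (1-a) := le_trans ha.1.le (le_max_left _ _)
  rw [Subtype.dist_eq, Subtype.dist_eq]
  rw [ContinuousMap.dist_le (mul_nonneg hK0 dist_nonneg)]
  intro t
  show dist (Tfun a f.1 t) (Tfun a g.1 t) ≤ _
  rcases le_or_gt (t:ℝ) (1/2) with ht | ht
  · rw [Tfun, Tfun, if_pos ht, if_pos ht]
    rw [Real.dist_eq, ← mul_sub, abs_mul, abs_of_pos ha.1]
    calc a * |IccExtend zero_le_one f.1 (2*(t:ℝ)) - IccExtend zero_le_one g.1 (2*(t:ℝ))|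
        ≤ a * dist (f.1 : C(II,ℝ)) g.1 := by
          refine mul_le_mul_of_nonneg_left ?_ ha.1.le
          have h := ContinuousMap.dist_apply_le_dist (f := f.1) (g := g.1)
            (projIcc 0 1 zero_le_one (2*(t:ℝ)))
          rw [Real.dist_eq] at h
          simpa [IccExtend] using h
      _ ≤ max a (1-a) * dist (f.1 : C(II,ℝ)) g.1 :=
          mul_le_mul_of_nonneg_right (le_max_left _ _) dist_nonneg
  · rw [Tfun, Tfun, if_neg (not_le.2 ht), if_neg (not_le.2 ht)]
    rw [Real.dist_eq]
    have : a + (1-a) * IccExtend zero_le_one f.1 (2*(t:ℝ)-1)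
        - (a + (1-a) * IccExtend zero_le_one g.1 (2*(t:ℝ)-1))
        = (1-a) * (IccExtend zero_le_one f.1 (2*(t:ℝ)-1) - IccExtend zero_le_one g.1 (2*(t:ℝ)-1)) := by ring
    rw [this, abs_mul, abs_of_pos (by linarith [ha.2] : (0:ℝ) < 1 - a)]
    calc (1-a) * |IccExtend zero_le_one f.1 (2*(t:ℝ)-1) - IccExtend zero_le_one g.1 (2*(t:ℝ)-1)|
        ≤ (1-a) * dist (f.1 : C(II,ℝ)) g.1 := by
          refine mul_le_mul_of_nonneg_left ?_ (by linarith [ha.2])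
          have h := ContinuousMap.dist_apply_le_dist (f := f.1) (g := g.1)
            (projIcc 0 1 zero_le_one (2*(t:ℝ)-1))
          rw [Real.dist_eq] at h
          simpa [IccExtend] using h
      _ ≤ max a (1-a) * dist (f.1 : C(II,ℝ)) g.1 :=
          mul_le_mul_of_nonneg_right (le_max_right _ _) dist_nonneg

instance : CompleteSpace S := isClosed_S.completeSpace_coe

lemma contracting (a : ℝ) (ha : a ∈ Set.Ioo (0:ℝ) 1) :
    ContractingWith ⟨max a (1-a), le_trans ha.1.le (le_max_left _ _)⟩ (T a ha) := by
  constructor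
  · exact NNReal.coe_lt_one.mp (max_lt ha.2 (by linarith [ha.1]))
  · exact LipschitzWith.of_dist_le_mul (dist_T a ha)

end DeRhamAux

end

/-- de Rham's functional equation, linear case: existence, uniqueness (on [0,1]),
boundary values and monotonicity of the Lebesgue singular function `L_a`. -/
theorem deRham_linear_existence_uniqueness (a : ℝ) (ha : a ∈ Set.Ioo (0:ℝ) 1) :
    ∃ L : ℝ → ℝ,
      (ContinuousOn L (Set.Icc 0 1) ∧
        (∀ x : ℝ, 0 ≤ x → x ≤ 1/2 → L x = a * L (2*x)) ∧
        (∀ x : ℝ, 1/2 ≤ x → x ≤ 1 → L x = a + (1-a) * L (2*x - 1))) ∧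
      L 0 = 0 ∧ L 1 = 1 ∧ MonotoneOn L (Set.Icc 0 1) ∧
      (∀ L' : ℝ → ℝ,
        (ContinuousOn L' (Set.Icc 0 1) ∧
          (∀ x : ℝ, 0 ≤ x → x ≤ 1/2 → L' x = a * L' (2*x)) ∧
          (∀ x : ℝ, 1/2 ≤ x → x ≤ 1 → L' x = a + (1-a) * L' (2*x - 1))) →
        Set.EqOn L L' (Set.Icc 0 1)) := by
  classical
  set L₀ : DeRhamAux.S :=
    ContractingWith.fixedPoint (DeRhamAux.T a ha) (DeRhamAux.contracting a ha) with hL₀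
  have hfix : DeRhamAux.T a ha L₀ = L₀ :=
    (DeRhamAux.contracting a ha).fixedPoint_isFixedPt
  have hfixfun : ∀ t : DeRhamAux.II, DeRhamAux.Tfun a L₀.1 (t:ℝ) = L₀.1 t := by
    intro t
    have := congrArg Subtype.val hfix
    exact DFunLike.congr_fun this t
  set L : ℝ → ℝ := IccExtend zero_le_one L₀.1 with hLdef
  have hmemIcc : ∀ x : ℝ, 0 ≤ x → x ≤ 1 → x ∈ DeRhamAux.II := fun x h1 h2 => ⟨h1, h2⟩
  have hval : ∀ (x : ℝ) (hx : x ∈ DeRhamAux.II), L x = L₀.1 ⟨x, hx⟩ := by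
    intro x hx
    exact IccExtend_of_mem _ _ hx
  have hT : ∀ (x : ℝ) (hx : x ∈ DeRhamAux.II), L x = DeRhamAux.Tfun a L₀.1 x := by
    intro x hx
    rw [hval x hx, ← hfixfun ⟨x, hx⟩]
  have hL0 : L 0 = 0 := by rw [hval 0 DeRhamAux.zero_mem]; exact L₀.2.1
  have hL1v : L 1 = 1 := by rw [hval 1 DeRhamAux.one_mem]; exact L₀.2.2.1
  have heq1 : ∀ x : ℝ, 0 ≤ x → x ≤ 1/2 → L x = a * L (2*x) := by
    intro x h0 h2
    rw [hT x (hmemIcc x h0 (by linarith)), DeRhamAux.Tfun, if_pos h2]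
  have heq2 : ∀ x : ℝ, 1/2 ≤ x → x ≤ 1 → L x = a + (1-a) * L (2*x - 1) := by
    intro x h0 h2
    by_cases hx : x ≤ 1/2
    · have hx12 : x = 1/2 := le_antisymm hx h0
      subst hx12
      rw [hT (1/2) (hmemIcc _ (by norm_num) (by norm_num)), DeRhamAux.Tfun,
        if_pos (le_refl _), show (2:ℝ)*(1/2) - 1 = 0 by norm_num,
        show (2:ℝ)*(1/2) = 1 by norm_num]
      change a * L 1 = a + (1-a) * L 0
      rw [hL0, hL1v]; ring
    · rw [hT x (hmemIcc x (by linarith) h2), DeRhamAux.Tfun, if_neg hx]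
  have hLcont : ContinuousOn L (Set.Icc 0 1) :=
    (L₀.1.continuous.comp continuous_projIcc).continuousOn
  have hmono : MonotoneOn L (Set.Icc 0 1) := by
    intro x hx y hy hxy
    rw [hval x hx, hval y hy]
    exact L₀.2.2.2 (Subtype.mk_le_mk.mpr hxy)
  refine ⟨L, ⟨hLcont, heq1, heq2⟩, hL0, hL1v, hmono, ?_⟩
  rintro L' ⟨hc', h1', h2'⟩
  -- uniqueness via the maximum of |L - L'|
  have hDcont : ContinuousOn (fun x => |L x - L' x|) (Set.Icc 0 1) :=
    (hLcont.sub hc').abs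
  obtain ⟨x₀, hx₀, hmax⟩ := isCompact_Icc.exists_isMaxOn
    (Set.nonempty_Icc.mpr zero_le_one) hDcont
  set M := |L x₀ - L' x₀| with hM
  have hM0 : 0 ≤ M := abs_nonneg _
  have hc1 : max a (1-a) < 1 := max_lt ha.2 (by linarith [ha.1])
  have key : M ≤ max a (1-a) * M := by
    rcases le_or_gt x₀ (1/2) with h | h
    · have h2x : 2*x₀ ∈ Set.Icc (0:ℝ) 1 := ⟨by linarith [hx₀.1], by linarith⟩
      have : M = a * |L (2*x₀) - L' (2*x₀)| := by
        rw [hM, heq1 x₀ hx₀.1 h, h1' x₀ hx₀.1 h, ← mul_sub, abs_mul, abs_of_pos ha.1]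
      calc M = a * |L (2*x₀) - L' (2*x₀)| := this
        _ ≤ a * M :=
            mul_le_mul_of_nonneg_left (hmax h2x) ha.1.le
        _ ≤ max a (1-a) * M := mul_le_mul_of_nonneg_right (le_max_left _ _) hM0
    · have h2x : 2*x₀ - 1 ∈ Set.Icc (0:ℝ) 1 := ⟨by linarith, by linarith [hx₀.2]⟩
      have : M = (1-a) * |L (2*x₀-1) - L' (2*x₀-1)| := by
        rw [hM, heq2 x₀ h.le hx₀.2, h2' x₀ h.le hx₀.2]
        rw [show a + (1-a) * L (2*x₀-1) - (a + (1-a) * L' (2*x₀-1))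
          = (1-a) * (L (2*x₀-1) - L' (2*x₀-1)) by ring, abs_mul,
          abs_of_pos (by linarith [ha.2] : (0:ℝ) < 1-a)]
      calc M = (1-a) * |L (2*x₀-1) - L' (2*x₀-1)| := this
        _ ≤ (1-a) * M :=
            mul_le_mul_of_nonneg_left (hmax h2x) (by linarith [ha.2])
        _ ≤ max a (1-a) * M := mul_le_mul_of_nonneg_right (le_max_right _ _) hM0
  have hMzero : M = 0 := by nlinarith
  intro x hx
  have hle : |L x - L' x| ≤ M := hmax hx
  rw [hMzero] at hle
  have : |L x - L' x| = 0 := le_antisymm hle (abs_nonneg _)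
  have := abs_eq_zero.mp this
  linarith [this]
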